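/- Let k be a finite field, let n, m be positive integers, and let (s_1, t_1), …, (s_m, t_m) be data with s_j ∈ k^n and t_j ∈ k. For a subset G ⊆ {1, …, n}, there exists a polynomial f ∈ k[x_1, …, x_n] involving only the variables x_i with i ∈ G and satisfying f(s_j) = t_j for all j = 1, …, m, if and only if for every pair of indices j, l with t_j ≠ t_l there exists some i ∈ G with (s_j)_i ≠ (s_l)_i. -/

import Mathlib

/-- Over a finite field `k`, given data `(s j, t j)` with `s j ∈ k^n`,
`t j ∈ k`, and a subset `G ⊆ {1, …, n}`, there is a polynomial supported on the
variables in `G` fitting the data iff any two data points with different output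
values differ in some coordinate in `G`. -/
theorem minimal_sets_criterion
    (k : Type*) [Field k] [Fintype k] (n m : ℕ) (hn : 0 < n) (hm : 0 < m)
    (s : Fin m → Fin n → k) (t : Fin m → k) (G : Set (Fin n)) :
    (∃ f ∈ MvPolynomial.supported k G, ∀ j, MvPolynomial.eval (s j) f = t j) ↔
      (∀ j l, t j ≠ t l → ∃ i ∈ G, s j i ≠ s l i) := by
  classical
  constructor
  · rintro ⟨f, hf, hfit⟩ j l htl
    rw [MvPolynomial.supported_eq_range_rename, AlgHom.mem_range] at hf
    obtain ⟨p, rfl⟩ := hf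
    by_contra hcon
    push_neg at hcon
    apply htl
    rw [← hfit j, ← hfit l, MvPolynomial.eval_rename, MvPolynomial.eval_rename]
    have : (s j ∘ Subtype.val : ↥G → k) = s l ∘ Subtype.val :=
      funext fun i => hcon i i.2
    rw [this]
  · intro h
    -- define the target function on (↥G → k)
    set e : (↥G → k) → k := fun v =>
      if hv : ∃ j, (fun i : ↥G => s j i) = v then t hv.choose else 0 with he
    have key : ∀ j, e (fun i : ↥G => s j i) = t j := by
      intro j
      have hv : ∃ j', (fun i : ↥G => s j' i) = (fun i : ↥G => s j i) := ⟨j, rfl⟩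
      rw [he]
      simp only [dif_pos hv]
      by_contra hne
      obtain ⟨i, hi, hsi⟩ := h _ _ hne
      exact hsi (congrFun hv.choose_spec ⟨i, hi⟩)
    -- get a polynomial representing e
    have : e ∈ (⊤ : Submodule k ((↥G → k) → k)) := Submodule.mem_top
    rw [← MvPolynomial.map_restrict_dom_evalₗ k ↥G, Submodule.mem_map] at this
    obtain ⟨p, -, hp⟩ := this
    refine ⟨MvPolynomial.rename (Subtype.val) p, ?_, ?_⟩
    · rw [MvPolynomial.supported_eq_range_rename, AlgHom.mem_range]
      exact ⟨p, rfl⟩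
    · intro j
      rw [MvPolynomial.eval_rename]
      have := congrFun hp (fun i : ↥G => s j i)
      simpa [key j, Function.comp_def] using this
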